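/- If n ≥ R(k,k) (the diagonal Ramsey number), then every n×n 0/1 dissimilarity matrix has star tree rank at most n − k + 1. -/

import Mathlib

/-- Off-diagonal entrywise (tropical) minimum decomposition of a dissimilarity matrix. -/
def DissMinDecomp {n r : ℕ} (M : Fin n → Fin n → ℝ) (N : Fin r → Fin n → Fin n → ℝ) : Prop :=
  ∀ i j : Fin n, i ≠ j → (∀ k, M i j ≤ N k i j) ∧ (∃ k, M i j = N k i j)

/-- The dissimilarity matrix `M` has star tree rank at most `r`: it is the
entrywise minimum of `r` star tree matrices `(v k i + v k j)`. -/
def StarRankLe {n : ℕ} (r : ℕ) (M : Fin n → Fin n → ℝ) : Prop :=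
  ∃ v : Fin r → Fin n → ℝ, DissMinDecomp M (fun k i j => v k i + v k j)

/-- The diagonal Ramsey number `R(k,k)`: the least `N` such that every simple
graph on `N` vertices contains a clique of size `k` or an independent set of
size `k`. -/
noncomputable def ramsey (k : ℕ) : ℕ :=
  sInf {N : ℕ | ∀ G : SimpleGraph (Fin N),
    (∃ S : Finset (Fin N), G.IsNClique k S) ∨ (∃ S : Finset (Fin N), Gᶜ.IsNClique k S)}



open SimpleGraph in
lemma comap_isNClique {α β : Type*} (f : α ↪ β) (G : SimpleGraph β) {k : ℕ} {s : Finset α}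
    (h : (G.comap f).IsNClique k s) : G.IsNClique k (s.map f) := by
  constructor
  · intro x hx y hy hxy
    simp only [Finset.coe_map, Set.mem_image, Finset.mem_coe] at hx hy
    obtain ⟨a, ha, rfl⟩ := hx
    obtain ⟨b, hb, rfl⟩ := hy
    exact h.1 ha hb (fun e => hxy (congrArg f e))
  · rw [Finset.card_map]; exact h.2

open SimpleGraph in
lemma comap_compl {α β : Type*} (f : α ↪ β) (G : SimpleGraph β) :
    Gᶜ.comap f = (G.comap f)ᶜ := by
  ext a b
  simp [SimpleGraph.comap, f.injective.ne_iff]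

def RP (N k l : ℕ) : Prop := ∀ G : SimpleGraph (Fin N),
  (∃ S : Finset (Fin N), G.IsNClique k S) ∨ (∃ S : Finset (Fin N), Gᶜ.IsNClique l S)

lemma RP.mono {m n k l : ℕ} (h : m ≤ n) (hm : RP m k l) : RP n k l := by
  intro G
  obtain hc | hc := hm (G.comap (Fin.castLEEmb h))
  · obtain ⟨S, hS⟩ := hc
    exact Or.inl ⟨S.map _, comap_isNClique _ G hS⟩
  · obtain ⟨S, hS⟩ := hc
    rw [← comap_compl (Fin.castLEEmb h)] at hS
    exact Or.inr ⟨S.map _, comap_isNClique _ Gᶜ hS⟩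

lemma ramsey_ex : ∀ k l : ℕ, ∃ N, RP N k l := by
  intro k
  induction k with
  | zero => exact fun l => ⟨0, fun G => Or.inl ⟨∅, by simp⟩⟩
  | succ k ihk =>
    intro l
    induction l with
    | zero => exact ⟨0, fun G => Or.inr ⟨∅, by simp⟩⟩
    | succ l ihl =>
      obtain ⟨a, ha⟩ := ihk (l + 1)
      obtain ⟨b, hb⟩ := ihl
      refine ⟨a + b + 1, ?_⟩
      intro G
      classical
      let v : Fin (a + b + 1) := ⟨0, by omega⟩
      let A : Finset (Fin (a + b + 1)) := G.neighborFinset v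
      let B : Finset (Fin (a + b + 1)) := (insert v A)ᶜ
      have hvA : v ∉ A := by simp [A]
      have hcard : A.card + B.card + 1 = a + b + 1 := by
        have h1 : B.card = a + b + 1 - (A.card + 1) := by
          rw [Finset.card_compl, Finset.card_insert_of_notMem hvA]
          simp
        have h2 : (insert v A).card ≤ a + b + 1 := by
          simpa using Finset.card_le_univ (insert v A)
        rw [Finset.card_insert_of_notMem hvA] at h2
        omega
      have hab : a ≤ A.card ∨ b ≤ B.card := by omega
      obtain hA | hB := hab
      · -- neighbors side
        set e := A.equivFin.symm with he
        let f : Fin A.card ↪ Fin (a + b + 1) :=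
          ⟨fun m => (e m : Fin (a + b + 1)), fun x y hxy => e.injective (Subtype.val_injective hxy)⟩
        have hmemA : ∀ m, f m ∈ A := fun m => (e m).2
        obtain hc | hc := (RP.mono hA (ha)) (G.comap f)
        · obtain ⟨S, hS⟩ := hc
          refine Or.inl ⟨insert v (S.map f), (comap_isNClique f G hS).insert ?_⟩
          intro x hx
          simp only [Finset.mem_map] at hx
          obtain ⟨m, _, rfl⟩ := hx
          exact (G.mem_neighborFinset v _).1 (hmemA m)
        · obtain ⟨S, hS⟩ := hc
          rw [← comap_compl f] at hS
          exact Or.inr ⟨S.map f, comap_isNClique f Gᶜ hS⟩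
      · -- non-neighbors side
        set e := B.equivFin.symm with he
        let f : Fin B.card ↪ Fin (a + b + 1) :=
          ⟨fun m => (e m : Fin (a + b + 1)), fun x y hxy => e.injective (Subtype.val_injective hxy)⟩
        have hmemB : ∀ m, f m ∈ B := fun m => (e m).2
        obtain hc | hc := (RP.mono hB (hb)) (G.comap f)
        · obtain ⟨S, hS⟩ := hc
          exact Or.inl ⟨S.map f, comap_isNClique f G hS⟩
        · obtain ⟨S, hS⟩ := hc
          rw [← comap_compl f] at hS
          refine Or.inr ⟨insert v (S.map f), (comap_isNClique f Gᶜ hS).insert ?_⟩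
          intro x hx
          simp only [Finset.mem_map] at hx
          obtain ⟨m, _, rfl⟩ := hx
          have := hmemB m
          simp only [B, Finset.mem_compl, Finset.mem_insert, not_or] at this
          rw [SimpleGraph.compl_adj]
          refine ⟨fun hvx => this.1 hvx.symm, ?_⟩
          intro hadj
          exact this.2 ((G.mem_neighborFinset v _).2 hadj)

lemma ramsey_spec {k n : ℕ} (hn : ramsey k ≤ n) : RP n k k := by
  obtain ⟨N, hN⟩ := ramsey_ex k k
  have hne : {N : ℕ | ∀ G : SimpleGraph (Fin N),
      (∃ S : Finset (Fin N), G.IsNClique k S) ∨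
      (∃ S : Finset (Fin N), Gᶜ.IsNClique k S)}.Nonempty := ⟨N, hN⟩
  have hmem := Nat.sInf_mem hne
  exact RP.mono hn hmem

lemma build {n k : ℕ} (M : Fin n → Fin n → ℝ)
    (hsym : ∀ i j, M i j = M j i)
    (h0 : ∀ i j : Fin n, i ≠ j → 0 ≤ M i j) (h1 : ∀ i j : Fin n, i ≠ j → M i j ≤ 1)
    (c : ℝ) (hc : 0 ≤ c)
    (S : Finset (Fin n)) (hS : S.card = k)
    (hclq : ∀ i ∈ S, ∀ j ∈ S, i ≠ j → M i j = c + c) :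
    StarRankLe (n - k + 1) M := by
  classical
  have hT : (Sᶜ : Finset (Fin n)).card = n - k := by
    rw [Finset.card_compl, hS, Fintype.card_fin]
  rw [← hT]
  set e := (Sᶜ : Finset (Fin n)).equivFin with he
  let star : Fin n → Fin n → ℝ := fun t i => if i = t then -1 else M t i + 1
  refine ⟨Fin.cases (fun i => if i ∈ S then c else 2) (fun m => star (e.symm m)), ?_⟩
  intro i j hij
  constructor
  · intro r
    refine Fin.cases ?_ ?_ r
    · simp only [Fin.cases_zero]
      by_cases hi : i ∈ S <;> by_cases hj : j ∈ S <;> simp only [hi, hj, if_pos, if_neg,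
        if_true, if_false] <;> [skip; skip; skip; skip]
      · exact le_of_eq (hclq i hi j hj hij)
      · have := h1 i j hij; linarith
      · have := h1 i j hij; linarith
      · have := h1 i j hij; linarith
    · intro m
      simp only [Fin.cases_succ]
      set t := ((e.symm m : (Sᶜ : Finset (Fin n))) : Fin n) with ht
      show M i j ≤ star t i + star t j
      by_cases hi : i = t
      · have hj : ¬ j = t := fun h => hij (hi.trans h.symm)
        simp only [star, if_pos hi, if_neg hj]
        rw [hi]
        linarith
      · by_cases hj : j = t
        · simp only [star, if_neg hi, if_pos hj]
          rw [hj, hsym]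
          linarith
        · simp only [star, if_neg hi, if_neg hj]
          have := h1 i j hij
          have h1' := h0 t i (fun h => hi h.symm)
          have h2' := h0 t j (fun h => hj h.symm)
          linarith
  · by_cases hi : i ∈ S
    · by_cases hj : j ∈ S
      · exact ⟨0, by simp [Fin.cases_zero, hi, hj, hclq i hi j hj hij]⟩
      · refine ⟨Fin.succ (e ⟨j, Finset.mem_compl.2 hj⟩), ?_⟩
        simp only [Fin.cases_succ, Equiv.symm_apply_apply]
        show M i j = star j i + star j j
        simp only [star, if_neg (show ¬ i = j from hij), if_pos rfl]
        rw [hsym]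
        ring
    · refine ⟨Fin.succ (e ⟨i, Finset.mem_compl.2 hi⟩), ?_⟩
      simp only [Fin.cases_succ, Equiv.symm_apply_apply]
      show M i j = star i i + star i j
      simp only [star, if_pos rfl, if_neg (show ¬ j = i from fun h => hij h.symm)]
      ring

theorem stmt12 (k n : ℕ) (hn : ramsey k ≤ n) (M : Fin n → Fin n → ℝ)
    (hsym : ∀ i j, M i j = M j i)
    (h01 : ∀ i j : Fin n, i ≠ j → M i j = 0 ∨ M i j = 1) :
    StarRankLe (n - k + 1) M := by
  classical
  have h0 : ∀ i j : Fin n, i ≠ j → 0 ≤ M i j := by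
    intro i j hij; rcases h01 i j hij with h | h <;> rw [h] <;> norm_num
  have h1 : ∀ i j : Fin n, i ≠ j → M i j ≤ 1 := by
    intro i j hij; rcases h01 i j hij with h | h <;> rw [h] <;> norm_num
  let G : SimpleGraph (Fin n) :=
    { Adj := fun i j => i ≠ j ∧ M i j = 0
      symm := ⟨fun i j h => ⟨h.1.symm, (hsym j i).trans h.2⟩⟩
      loopless := ⟨fun i h => h.1 rfl⟩ }
  obtain hc | hc := ramsey_spec hn G
  · obtain ⟨S, hS⟩ := hc
    refine build M hsym h0 h1 0 le_rfl S hS.2 ?_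
    intro i hi j hj hij
    have := hS.1 hi hj hij
    simpa using this.2
  · obtain ⟨S, hS⟩ := hc
    refine build M hsym h0 h1 (1/2) (by norm_num) S hS.2 ?_
    intro i hi j hj hij
    have hadj := hS.1 hi hj hij
    rw [SimpleGraph.compl_adj] at hadj
    have : ¬ M i j = 0 := fun h => hadj.2 ⟨hij, h⟩
    rcases h01 i j hij with h | h
    · exact absurd h this
    · rw [h]; norm_num
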